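/- For any cardinal λ there is a theory T = Th(A_E) of an E-combination in a language Σ of cardinality |λ + 1| (i.e., max(λ,1)) such that e-Sp(T) = λ. Concretely, for λ > 0, take language {P_i : i < λ} of unary predicates and structures A_{i,n} with n elements, all in P_i and none in P_j (j ≠ i); then the E-combination of all A_{i,n} has e-spectrum exactly λ, witnessed by the λ pairwise non-equivalent structures with P_i infinite. -/

import Mathlib

open FirstOrder Language Cardinal

set_option autoImplicit false

/-- The induced structure on a subset of the universe of a structure in a relational language. -/
def subStructure (L : FirstOrder.Language.{0,0}) [L.IsRelational] (M : Type) [L.Structure M]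
    (s : Set M) : L.Structure s where
  funMap := fun f _ => isEmptyElim f
  RelMap := fun r x => Structure.RelMap r (fun k => (x k : M))

/-- The `E`-class of an element `a`, as a set. -/
def classSet (L : FirstOrder.Language.{0,0}) {N : Type} [L.Structure N] (e : L.Relations 2)
    (a : N) : Set N :=
  {b | Structure.RelMap e ![b, a]}

noncomputable instance (L : FirstOrder.Language.{0,0}) [L.IsRelational] {N : Type}
    [L.Structure N] (e : L.Relations 2) (a : N) : L.Structure (classSet L e a) :=
  subStructure L N (classSet L e a)

/-- The complete theory of the structure induced on the `E`-class of `a`. -/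
noncomputable def classTheory (L : FirstOrder.Language.{0,0}) [L.IsRelational] {N : Type}
    [L.Structure N] (e : L.Relations 2) (a : N) : L.Theory :=
  L.completeTheory (classSet L e a)

/-- `T0` is the theory of some `E`-class of some model of `Th(M)` (i.e. of some `A' ≡ A_E`). -/
def IsClassTheory (L : FirstOrder.Language.{0,0}) [L.IsRelational] (M : Type) [L.Structure M]
    (e : L.Relations 2) (T0 : L.Theory) : Prop :=
  ∃ (N : FirstOrder.Language.Theory.ModelType.{0,0,0} (L.completeTheory M)) (a : N),
    T0 = classTheory L e a

/-- The `e`-spectrum: the number of pairwise elementarily non-equivalent structures occurring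
as `E`-classes of models of `Th(M)` that are not elementarily equivalent to any of the classes
of `M` (the classes of the elements `rep i`). -/
noncomputable def eSp (L : FirstOrder.Language.{0,0}) [L.IsRelational] (M : Type)
    [L.Structure M] (e : L.Relations 2) {I : Type} (rep : I → M) : Cardinal :=
  #{T0 : L.Theory // IsClassTheory L M e T0 ∧ ∀ i : I, T0 ≠ classTheory L e (rep i)}

namespace Stmt15

variable (α : Type)

def Rels : ℕ → Type
  | 1 => α
  | 2 => Unit
  | _ => Empty

def Lang : FirstOrder.Language.{0,0} := ⟨fun _ => Empty, Rels α⟩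

instance : (Lang α).IsRelational := fun _ => inferInstanceAs (IsEmpty Empty)

def eRel : (Lang α).Relations 2 := ()

def pRel (j : α) : (Lang α).Relations 1 := j

def relsEquiv : (Σ n, (Lang α).Relations n) ≃ (α ⊕ Unit) where
  toFun := fun x => match x with
    | ⟨1, j⟩ => Sum.inl j
    | ⟨2, _⟩ => Sum.inr ()
  invFun := fun x => match x with
    | Sum.inl j => ⟨1, j⟩
    | Sum.inr _ => ⟨2, ()⟩
  left_inv := by rintro ⟨n, r⟩; match n, r with
    | 1, j => rfl
    | 2, _ => rfl
  right_inv := by rintro (j | u) <;> rfl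

lemma card_Lang : (Lang α).card = #α + 1 := by
  have h0 : #(Σ n, (Lang α).Functions n) = 0 := by
    simp [Lang]
  have h1 : #(Σ n, (Lang α).Relations n) = #α + 1 := by
    rw [Cardinal.mk_congr (relsEquiv α)]
    simp
  rw [Language.card, Language.Symbols, Cardinal.mk_sum, h0, h1]
  simp

/-- index of classes -/
abbrev Cl : Type := (α × ℕ) ⊕ (ℕ ⊕ Unit)

def F : Cl α → Type
  | .inl (_, n) => Fin (n + 1)
  | .inr (.inl n) => Fin (n + 1)
  | .inr (.inr _) => ℕ

def color : Cl α → Option α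
  | .inl (i, _) => some i
  | .inr _ => none

def Mod : Type := Σ c : Cl α, F α c

instance : (Lang α).Structure (Mod α) where
  funMap := fun f => isEmptyElim f
  RelMap := fun {n} r => match n, r with
    | 1, j => fun x => color α (x 0).1 = some j
    | 2, _ => fun x => (x 0).1 = (x 1).1

lemma relMap_e_mod (x y : Mod α) :
    Structure.RelMap (eRel α) ![x, y] ↔ x.1 = y.1 := Iff.rfl

lemma relMap_p_mod (j : α) (x : Mod α) :
    Structure.RelMap (pRel α j) ![x] ↔ color α x.1 = some j := Iff.rfl

/-- canonical infinite structure with color pattern `c` -/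
def PatC (_c : Option α) : Type := ℕ

instance (c : Option α) : (Lang α).Structure (PatC α c) where
  funMap := fun f => isEmptyElim f
  RelMap := fun {n} r => match n, r with
    | 1, j => fun _ => c = some j
    | 2, _ => fun _ => True

instance (c : Option α) : Infinite (PatC α c) := inferInstanceAs (Infinite ℕ)

/-- canonical structure on `F α c` with color pattern `color α c` -/
def RepT (c : Cl α) : Type := F α c

instance (c : Cl α) : (Lang α).Structure (RepT α c) where
  funMap := fun f => isEmptyElim f
  RelMap := fun {n} r => match n, r with
    | 1, j => fun _ => color α c = some j
    | 2, _ => fun _ => True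

instance : Infinite (RepT α (.inr (.inr ()))) := inferInstanceAs (Infinite ℕ)
instance (i : α) (n : ℕ) : Finite (RepT α (.inl (i, n))) := inferInstanceAs (Finite (Fin (n+1)))
instance (n : ℕ) : Finite (RepT α (.inr (.inl n))) := inferInstanceAs (Finite (Fin (n+1)))
instance (c : Cl α) : Nonempty (RepT α c) := by
  rcases c with ⟨i, n⟩ | n | u
  · exact ⟨(0 : Fin (n+1))⟩
  · exact ⟨(0 : Fin (n+1))⟩
  · exact ⟨(0 : ℕ)⟩

/-- A structure is `c`-homogeneous: `e` is total and `P j` holds iff `c = some j`. -/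
def Homog (c : Option α) (X : Type) [(Lang α).Structure X] : Prop :=
  (∀ x y : X, Structure.RelMap (eRel α) ![x, y]) ∧
  ∀ (j : α) (x : X), Structure.RelMap (pRel α j) ![x] ↔ c = some j

lemma homog_patC (c : Option α) : Homog α c (PatC α c) :=
  ⟨fun _ _ => trivial, fun _ _ => Iff.rfl⟩

lemma homog_repT (c : Cl α) : Homog α (color α c) (RepT α c) :=
  ⟨fun _ _ => trivial, fun _ _ => Iff.rfl⟩

lemma vec2_eq {X : Type} (x : Fin 2 → X) : x = ![x 0, x 1] := by
  funext i; fin_cases i <;> rfl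

lemma vec1_eq {X : Type} (x : Fin 1 → X) : x = ![x 0] := by
  funext i; fin_cases i; rfl

/-- a bijection between `c`-homogeneous structures is an `L`-isomorphism -/
def homogEquiv {c : Option α} {X Y : Type} [(Lang α).Structure X] [(Lang α).Structure Y]
    (hX : Homog α c X) (hY : Homog α c Y) (b : X ≃ Y) : X ≃[Lang α] Y where
  toEquiv := b
  map_fun' := fun f _ => isEmptyElim f
  map_rel' := by
    intro n r x
    match n, r with
    | 1, j =>
      have h1 : b.toFun ∘ x = ![b (x 0)] := by funext i; fin_cases i; rfl
      rw [h1, vec1_eq x]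
      exact (hY.2 j (b (x 0))).trans (hX.2 j (x 0)).symm
    | 2, u =>
      have h1 : b.toFun ∘ x = ![b (x 0), b (x 1)] := by funext i; fin_cases i <;> rfl
      rw [h1, vec2_eq x]
      exact iff_of_true (hY.1 _ _) (hX.1 _ _)

lemma theory_eq_of_equiv {X Y : Type} [(Lang α).Structure X] [(Lang α).Structure Y]
    (g : X ≃[Lang α] Y) :
    (Lang α).completeTheory X = (Lang α).completeTheory Y :=
  (StrongHomClass.elementarilyEquivalent g).completeTheory_eq

lemma theory_eq_of_homog_equiv {c : Option α} {X Y : Type} [(Lang α).Structure X]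
    [(Lang α).Structure Y] (hX : Homog α c X) (hY : Homog α c Y) (b : X ≃ Y) :
    (Lang α).completeTheory X = (Lang α).completeTheory Y :=
  theory_eq_of_equiv α (homogEquiv α hX hY b)

section Sentences

/-- `∀ x, P j x` -/
def posSent (j : α) : (Lang α).Sentence := ∀' ((pRel α j).boundedFormula₁ &0)

/-- `∀ x, ¬ P j x` -/
def negSent (j : α) : (Lang α).Sentence := ∀' ∼((pRel α j).boundedFormula₁ &0)

/-- `∃ x, P j x` -/
def someSent (j : α) : (Lang α).Sentence := ∃' ((pRel α j).boundedFormula₁ &0)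

/-- `∀ x y, e x y` -/
def totSent : (Lang α).Sentence := ∀' ∀' ((eRel α).boundedFormula₂ &0 &1)

/-- `∀ x y z, e x z → e y z → e x y` -/
def totClassSent : (Lang α).Sentence :=
  ∀' ∀' ∀' ((eRel α).boundedFormula₂ &0 &2 ⟹ (eRel α).boundedFormula₂ &1 &2 ⟹
    (eRel α).boundedFormula₂ &0 &1)

/-- `∀ x y z, e x z → e y z → P j x → P j y` -/
def constSent (j : α) : (Lang α).Sentence :=
  ∀' ∀' ∀' ((eRel α).boundedFormula₂ &0 &2 ⟹ (eRel α).boundedFormula₂ &1 &2 ⟹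
    (pRel α j).boundedFormula₁ &0 ⟹ (pRel α j).boundedFormula₁ &1)

/-- `∀ x, P i x → ¬ P j x` -/
def disjSent (i j : α) : (Lang α).Sentence :=
  ∀' ((pRel α i).boundedFormula₁ &0 ⟹ ∼((pRel α j).boundedFormula₁ &0))

/-- `∀ x, e x x` -/
def reflSent : (Lang α).Sentence := ∀' ((eRel α).boundedFormula₂ &0 &0)

variable {K : Type} [(Lang α).Structure K]

lemma realize_posSent (j : α) :
    K ⊨ posSent α j ↔ ∀ x : K, Structure.RelMap (pRel α j) ![x] := by
  simp [posSent, Sentence.Realize, Formula.Realize, Fin.snoc]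

lemma realize_negSent (j : α) :
    K ⊨ negSent α j ↔ ∀ x : K, ¬ Structure.RelMap (pRel α j) ![x] := by
  simp [negSent, Sentence.Realize, Formula.Realize, Fin.snoc]

lemma realize_someSent (j : α) :
    K ⊨ someSent α j ↔ ∃ x : K, Structure.RelMap (pRel α j) ![x] := by
  simp [someSent, Sentence.Realize, Formula.Realize, Fin.snoc]

lemma realize_totSent :
    K ⊨ totSent α ↔ ∀ x y : K, Structure.RelMap (eRel α) ![x, y] := by
  simp [totSent, Sentence.Realize, Formula.Realize, Fin.snoc]

lemma realize_totClassSent :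
    K ⊨ totClassSent α ↔ ∀ x y z : K, Structure.RelMap (eRel α) ![x, z] →
      Structure.RelMap (eRel α) ![y, z] → Structure.RelMap (eRel α) ![x, y] := by
  simp [totClassSent, Sentence.Realize, Formula.Realize, Fin.snoc]

lemma realize_constSent (j : α) :
    K ⊨ constSent α j ↔ ∀ x y z : K, Structure.RelMap (eRel α) ![x, z] →
      Structure.RelMap (eRel α) ![y, z] → Structure.RelMap (pRel α j) ![x] →
      Structure.RelMap (pRel α j) ![y] := by
  simp [constSent, Sentence.Realize, Formula.Realize, Fin.snoc]

lemma realize_disjSent (i j : α) :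
    K ⊨ disjSent α i j ↔ ∀ x : K, Structure.RelMap (pRel α i) ![x] →
      ¬ Structure.RelMap (pRel α j) ![x] := by
  simp [disjSent, Sentence.Realize, Formula.Realize, Fin.snoc]

lemma realize_reflSent :
    K ⊨ reflSent α ↔ ∀ x : K, Structure.RelMap (eRel α) ![x, x] := by
  simp [reflSent, Sentence.Realize, Formula.Realize, Fin.snoc]

end Sentences

section PatTheory

open Classical in
/-- the theory of an infinite structure where `e` is total and `P j` holds iff `c = some j` -/
noncomputable def Tpat (c : Option α) : (Lang α).Theory :=
  {totSent α} ∪ (⋃ j : α, {if c = some j then posSent α j else negSent α j}) ∪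
    (Lang α).infiniteTheory

variable {K : Type} [(Lang α).Structure K]

lemma model_Tpat_iff (c : Option α) :
    K ⊨ Tpat α c ↔ (Homog α c K ∧ Infinite K) := by
  rw [Tpat, Theory.model_union_iff, Theory.model_union_iff, model_infiniteTheory_iff,
    Theory.model_singleton_iff, realize_totSent]
  classical
  constructor
  · rintro ⟨⟨htot, hp⟩, hinf⟩
    rw [Theory.model_iff] at hp
    refine ⟨⟨htot, fun j x => ?_⟩, hinf⟩
    have := hp (if c = some j then posSent α j else negSent α j)
      (Set.mem_iUnion.2 ⟨j, rfl⟩)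
    by_cases hc : c = some j
    · rw [hc]; simp only [hc, if_pos rfl] at this
      exact iff_of_true ((realize_posSent α j).1 this x) rfl
    · simp only [if_neg hc] at this
      exact iff_of_false ((realize_negSent α j).1 this x) hc
  · rintro ⟨⟨htot, hp⟩, hinf⟩
    refine ⟨⟨htot, ?_⟩, hinf⟩
    rw [Theory.model_iff]
    intro φ hφ
    obtain ⟨j, hj⟩ := Set.mem_iUnion.1 hφ
    rw [Set.mem_singleton_iff] at hj
    subst hj
    by_cases hc : c = some j
    · rw [if_pos hc, realize_posSent]
      intro x; exact (hp j x).2 hc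
    · rw [if_neg hc, realize_negSent]
      intro x h; exact hc ((hp j x).1 h)

lemma Tpat_isComplete (c : Option α) : (Tpat α c).IsComplete := by
  have hcat : Cardinal.Categorical (#α + ℵ₀) (Tpat α c) := by
    intro X Y hX hY
    have hXm := (model_Tpat_iff α c).1 X.is_model
    have hYm := (model_Tpat_iff α c).1 Y.is_model
    obtain ⟨b⟩ := Cardinal.eq.1 (hX.trans hY.symm)
    exact ⟨homogEquiv α hXm.1 hYm.1 b⟩
  refine Cardinal.Categorical.isComplete _ _ hcat ?_ ?_ ?_ ?_
  · exact le_add_self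
  · rw [Cardinal.lift_id, Cardinal.lift_id, card_Lang]
    exact add_le_add le_rfl Cardinal.one_le_aleph0
  · haveI : PatC α c ⊨ Tpat α c := (model_Tpat_iff α c).2 ⟨homog_patC α c, inferInstance⟩
    exact ⟨Theory.ModelType.of _ (PatC α c)⟩
  · intro X
    exact ((model_Tpat_iff α c).1 X.is_model).2

lemma theory_eq_of_homog_infinite {c : Option α} {X Y : Type} [(Lang α).Structure X]
    [(Lang α).Structure Y] (hX : Homog α c X) (hY : Homog α c Y)
    (hiX : Infinite X) (hiY : Infinite Y) :
    (Lang α).completeTheory X = (Lang α).completeTheory Y := by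
  have hc := Tpat_isComplete α c
  haveI : X ⊨ Tpat α c := (model_Tpat_iff α c).2 ⟨hX, hiX⟩
  haveI : Y ⊨ Tpat α c := (model_Tpat_iff α c).2 ⟨hY, hiY⟩
  ext φ
  rw [mem_completeTheory, mem_completeTheory, hc.realize_sentence_iff φ X,
    hc.realize_sentence_iff φ Y]

end PatTheory

section ClassSet

variable {N : Type} [(Lang α).Structure N]

lemma mem_classSet_iff (a b : N) :
    b ∈ classSet (Lang α) (eRel α) a ↔ Structure.RelMap (eRel α) ![b, a] := Iff.rfl

lemma classSet_relMap₂ (a : N) (r : (Lang α).Relations 2)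
    (x y : classSet (Lang α) (eRel α) a) :
    Structure.RelMap r ![x, y] ↔ Structure.RelMap r ![(x : N), (y : N)] := by
  have h : (fun k => ((![x, y] : Fin 2 → _) k : N)) = ![(x : N), (y : N)] := by
    funext i; fin_cases i <;> rfl
  show Structure.RelMap r (fun k => ((![x, y] : Fin 2 → _) k : N)) ↔ _
  rw [h]

lemma classSet_relMap₁ (a : N) (r : (Lang α).Relations 1)
    (x : classSet (Lang α) (eRel α) a) :
    Structure.RelMap r ![x] ↔ Structure.RelMap r ![(x : N)] := by
  have h : (fun k => ((![x] : Fin 1 → _) k : N)) = ![(x : N)] := by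
    funext i; fin_cases i; rfl
  show Structure.RelMap r (fun k => ((![x] : Fin 1 → _) k : N)) ↔ _
  rw [h]

open Classical in
/-- the color of the class of `a` : the unique `j` such that `P j a`, if any. -/
noncomputable def colorOf (a : N) : Option α :=
  if h : ∃ j : α, Structure.RelMap (pRel α j) ![a] then some h.choose else none

lemma colorOf_eq_some_iff
    (hdisj : ∀ i j : α, i ≠ j → ∀ x : N, Structure.RelMap (pRel α i) ![x] →
      ¬ Structure.RelMap (pRel α j) ![x])
    (a : N) (j : α) :
    colorOf α a = some j ↔ Structure.RelMap (pRel α j) ![a] := by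
  classical
  rw [colorOf]
  by_cases h : ∃ j' : α, Structure.RelMap (pRel α j') ![a]
  · rw [dif_pos h, Option.some_inj]
    constructor
    · rintro rfl; exact h.choose_spec
    · intro hj
      by_contra hne
      exact hdisj _ _ hne a h.choose_spec hj
  · rw [dif_neg h]
    refine iff_of_false (by simp) (fun hj => h ⟨j, hj⟩)

/-- the class of an element is a homogeneous structure of its color -/
lemma homog_class
    (hrefl : ∀ x : N, Structure.RelMap (eRel α) ![x, x])
    (htot : ∀ x y z : N, Structure.RelMap (eRel α) ![x, z] →
      Structure.RelMap (eRel α) ![y, z] → Structure.RelMap (eRel α) ![x, y])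
    (hconst : ∀ j : α, ∀ x y z : N, Structure.RelMap (eRel α) ![x, z] →
      Structure.RelMap (eRel α) ![y, z] → Structure.RelMap (pRel α j) ![x] →
      Structure.RelMap (pRel α j) ![y])
    (hdisj : ∀ i j : α, i ≠ j → ∀ x : N, Structure.RelMap (pRel α i) ![x] →
      ¬ Structure.RelMap (pRel α j) ![x])
    (a : N) :
    Homog α (colorOf α a) (classSet (Lang α) (eRel α) a) := by
  constructor
  · intro x y
    rw [classSet_relMap₂]
    exact htot _ _ a x.2 y.2
  · intro j x
    rw [classSet_relMap₁, colorOf_eq_some_iff α hdisj]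
    constructor
    · exact hconst j (x : N) a a x.2 (hrefl a)
    · exact hconst j a (x : N) a (hrefl a) x.2

end ClassSet

section RepClasses

def pt : (c : Cl α) → F α c
  | .inl (_, n) => (0 : Fin (n + 1))
  | .inr (.inl n) => (0 : Fin (n + 1))
  | .inr (.inr _) => (0 : ℕ)

def rep (c : Cl α) : Mod α := ⟨c, pt α c⟩

lemma mem_classSet_rep_iff (c : Cl α) (b : Mod α) :
    b ∈ classSet (Lang α) (eRel α) (rep α c) ↔ b.1 = c := Iff.rfl

/-- The class of `rep c` is in bijection with `F α c`. -/
def classRepEquiv (c : Cl α) : classSet (Lang α) (eRel α) (rep α c) ≃ RepT α c where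
  toFun := fun b => (show b.1.1 = c from b.2) ▸ b.1.2
  invFun := fun y => ⟨⟨c, y⟩, rfl⟩
  left_inv := by rintro ⟨⟨c', y⟩, (h : c' = c)⟩; subst h; rfl
  right_inv := by intro y; rfl

lemma homog_classRep (c : Cl α) :
    Homog α (color α c) (classSet (Lang α) (eRel α) (rep α c)) := by
  constructor
  · intro x y
    rw [classSet_relMap₂]
    show (x : Mod α).1 = (y : Mod α).1
    rw [(show (x : Mod α).1 = c from x.2), (show (y : Mod α).1 = c from y.2)]
  · intro j x
    rw [classSet_relMap₁]
    show color α (x : Mod α).1 = some j ↔ _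
    rw [(show (x : Mod α).1 = c from x.2)]

lemma classTheory_rep (c : Cl α) :
    classTheory (Lang α) (eRel α) (rep α c) = (Lang α).completeTheory (RepT α c) :=
  theory_eq_of_homog_equiv α (homog_classRep α c) (homog_repT α c) (classRepEquiv α c)

end RepClasses

section ModelFacts

variable {N : Type} [(Lang α).Structure N] [N ⊨ (Lang α).completeTheory (Mod α)]

lemma model_refl : ∀ x : N, Structure.RelMap (eRel α) ![x, x] := by
  refine (realize_reflSent α).1 (Theory.realize_sentence_of_mem ((Lang α).completeTheory (Mod α)) (mem_completeTheory.2 ?_))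
  exact (realize_reflSent α).2 (fun x => rfl)

lemma model_tot : ∀ x y z : N, Structure.RelMap (eRel α) ![x, z] →
    Structure.RelMap (eRel α) ![y, z] → Structure.RelMap (eRel α) ![x, y] := by
  refine (realize_totClassSent α).1 (Theory.realize_sentence_of_mem ((Lang α).completeTheory (Mod α)) (mem_completeTheory.2 ?_))
  refine (realize_totClassSent α).2 ?_
  intro x y z h1 h2
  rw [relMap_e_mod] at *
  rw [h1, h2]

lemma model_const : ∀ j : α, ∀ x y z : N, Structure.RelMap (eRel α) ![x, z] →
    Structure.RelMap (eRel α) ![y, z] → Structure.RelMap (pRel α j) ![x] →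
    Structure.RelMap (pRel α j) ![y] := by
  intro j
  refine (realize_constSent α j).1 (Theory.realize_sentence_of_mem ((Lang α).completeTheory (Mod α)) (mem_completeTheory.2 ?_))
  refine (realize_constSent α j).2 ?_
  intro x y z h1 h2 h3
  rw [relMap_e_mod] at h1 h2
  rw [relMap_p_mod] at h3 ⊢
  rw [h2, ← h1, h3]

lemma model_disj : ∀ i j : α, i ≠ j → ∀ x : N, Structure.RelMap (pRel α i) ![x] →
    ¬ Structure.RelMap (pRel α j) ![x] := by
  intro i j hij
  refine (realize_disjSent α i j).1
    (Theory.realize_sentence_of_mem ((Lang α).completeTheory (Mod α)) (mem_completeTheory.2 ?_))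
  refine (realize_disjSent α i j).2 ?_
  intro x h1 h2
  rw [relMap_p_mod] at h1 h2
  rw [h1] at h2
  exact hij (Option.some_inj.1 h2)

/-- classification of theories of classes in models of `Th (Mod α)`. -/
lemma class_theory_cases (a : N) :
    (∃ c : Cl α, classTheory (Lang α) (eRel α) a = classTheory (Lang α) (eRel α) (rep α c)) ∨
    (∃ i : α, classTheory (Lang α) (eRel α) a =
      (Lang α).completeTheory (PatC α (some i))) := by
  have hH := homog_class α (model_refl α) (model_tot α) (model_const α) (model_disj α) a
  have hne : Nonempty (classSet (Lang α) (eRel α) a) := ⟨⟨a, model_refl α a⟩⟩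
  by_cases hfin : Finite (classSet (Lang α) (eRel α) a)
  · obtain ⟨n, ⟨b⟩⟩ := Finite.exists_equiv_fin (classSet (Lang α) (eRel α) a)
    match n, b with
    | 0, b => exact (b hne.some).elim0
    | (m + 1), b =>
      left
      cases hc : colorOf α a with
      | some i =>
        refine ⟨.inl (i, m), ?_⟩
        rw [classTheory_rep]
        rw [hc] at hH
        exact theory_eq_of_homog_equiv α hH (homog_repT α (.inl (i, m))) b
      | none =>
        refine ⟨.inr (.inl m), ?_⟩
        rw [classTheory_rep]
        rw [hc] at hH
        exact theory_eq_of_homog_equiv α hH (homog_repT α (.inr (.inl m))) b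
  · have hinf : Infinite (classSet (Lang α) (eRel α) a) := not_finite_iff_infinite.1 hfin
    cases hc : colorOf α a with
    | some i =>
      right
      rw [hc] at hH
      exact ⟨i, theory_eq_of_homog_infinite α hH (homog_patC α (some i)) hinf
        inferInstance⟩
    | none =>
      left
      refine ⟨.inr (.inr ()), ?_⟩
      rw [classTheory_rep]
      rw [hc] at hH
      exact theory_eq_of_homog_infinite α hH (homog_repT α (.inr (.inr ()))) hinf
        (inferInstanceAs (Infinite ℕ))

end ModelFacts

section Distinct

lemma patC_realize_someSent (c : Option α) (j : α) :
    PatC α c ⊨ someSent α j ↔ c = some j := by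
  rw [realize_someSent]
  constructor
  · rintro ⟨x, hx⟩; exact hx
  · intro h; exact ⟨(0 : ℕ), h⟩

lemma repT_realize_someSent (c : Cl α) (j : α) :
    RepT α c ⊨ someSent α j ↔ color α c = some j := by
  rw [realize_someSent]
  constructor
  · rintro ⟨x, hx⟩; exact hx
  · intro h; exact ⟨Classical.arbitrary _, h⟩

lemma thI_injective :
    Function.Injective (fun i : α => (Lang α).completeTheory (PatC α (some i))) := by
  intro i j h
  have hEE : PatC α (some i) ≅[Lang α] PatC α (some j) := h
  have := (hEE.realize_sentence (someSent α i)).1 ((patC_realize_someSent α (some i) i).2 rfl)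
  exact (Option.some_inj.1 ((patC_realize_someSent α (some j) i).1 this)).symm

lemma thI_ne_rep (i : α) (c : Cl α) :
    (Lang α).completeTheory (PatC α (some i)) ≠ classTheory (Lang α) (eRel α) (rep α c) := by
  rw [classTheory_rep]
  intro h
  have hEE : PatC α (some i) ≅[Lang α] RepT α c := h
  rcases c with ⟨j, n⟩ | n | u
  · exact (not_finite_iff_infinite.2 (hEE.infinite_iff.1 inferInstance)) inferInstance
  · exact (not_finite_iff_infinite.2 (hEE.infinite_iff.1 inferInstance)) inferInstance
  · have := (hEE.realize_sentence (someSent α i)).1 ((patC_realize_someSent α (some i) i).2 rfl)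
    have h2 := (repT_realize_someSent α _ i).1 this
    simp [color] at h2

end Distinct

section Ultra

instance : Nonempty (Mod α) := ⟨rep α (.inr (.inr ()))⟩

/-- the ultrapower of `Mod α` along the hyperfilter on `ℕ` -/
abbrev UP : Type := ((Filter.hyperfilter ℕ : Ultrafilter ℕ) : Filter ℕ).Product
  (fun _ : ℕ => Mod α)

lemma UP_model : (UP α) ⊨ (Lang α).completeTheory (Mod α) := by
  rw [Theory.model_iff]
  intro φ hφ
  exact (Ultraproduct.sentence_realize φ).2
    (Filter.Eventually.of_forall (fun _ => mem_completeTheory.1 hφ))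

/-- the image of a sequence in the ultrapower -/
noncomputable def mkUP (f : ∀ _ : ℕ, Mod α) : UP α :=
  Quotient.mk (Filter.productSetoid _ _) f

lemma relMap_UP {n : ℕ} (r : (Lang α).Relations n) (f : Fin n → (∀ _ : ℕ, Mod α)) :
    Structure.RelMap (M := UP α) r (fun i => mkUP α (f i)) ↔
      ∀ᶠ m in ((Filter.hyperfilter ℕ : Ultrafilter ℕ) : Filter ℕ),
        Structure.RelMap r (fun i => f i m) :=
  relMap_quotient_mk' _ r f

def aFun (i : α) : ∀ _ : ℕ, Mod α := fun n => ⟨.inl (i, n), (0 : Fin (n + 1))⟩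

def bFun (i : α) (k : ℕ) : ∀ _ : ℕ, Mod α :=
  fun n => ⟨.inl (i, n), (⟨min k n, by omega⟩ : Fin (n + 1))⟩

lemma b_in_class (i : α) (k : ℕ) :
    (mkUP α (bFun α i k) : UP α) ∈
      classSet (Lang α) (eRel α) (mkUP α (aFun α i) : UP α) := by
  rw [mem_classSet_iff]
  have h : (![(mkUP α (bFun α i k) : UP α), mkUP α (aFun α i)]) =
      (fun j => mkUP α ((![bFun α i k, aFun α i]) j)) := by
    funext j; fin_cases j <;> rfl
  rw [h, relMap_UP]
  exact Filter.Eventually.of_forall (fun m => rfl)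

lemma b_injective (i : α) : Function.Injective (fun k => (mkUP α (bFun α i k) : UP α)) := by
  intro k l h
  have heq : ∀ᶠ m in ((Filter.hyperfilter ℕ : Ultrafilter ℕ) : Filter ℕ),
      bFun α i k m = bFun α i l m := Quotient.exact h
  have hge : ∀ᶠ m in ((Filter.hyperfilter ℕ : Ultrafilter ℕ) : Filter ℕ),
      max k l ≤ m := by
    apply Filter.hyperfilter_le_cofinite
    rw [Nat.cofinite_eq_atTop]
    exact Filter.eventually_ge_atTop (max k l)
  obtain ⟨m, h1, h2⟩ := (heq.and hge).exists
  have h5 : min k m = min l m := by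
    injection h1 with e1 e2
    exact congrArg Fin.val e2
  rw [min_eq_left (le_of_max_le_left h2), min_eq_left (le_of_max_le_right h2)] at h5
  exact h5

lemma p_aFun (i : α) :
    Structure.RelMap (pRel α i) ![(mkUP α (aFun α i) : UP α)] := by
  have h : (![(mkUP α (aFun α i) : UP α)]) =
      (fun j => mkUP α ((![aFun α i]) j)) := by
    funext j; fin_cases j; rfl
  rw [h, relMap_UP]
  exact Filter.Eventually.of_forall (fun m => rfl)

lemma class_a_infinite (i : α) :
    Infinite (classSet (Lang α) (eRel α) (mkUP α (aFun α i) : UP α)) := by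
  apply Infinite.of_injective
    (fun k : ℕ => (⟨mkUP α (bFun α i k), b_in_class α i k⟩ :
      classSet (Lang α) (eRel α) (mkUP α (aFun α i) : UP α)))
  intro k l h
  exact b_injective α i (congrArg Subtype.val h)

lemma classTheory_a (i : α) :
    classTheory (Lang α) (eRel α) (mkUP α (aFun α i) : UP α) =
      (Lang α).completeTheory (PatC α (some i)) := by
  haveI := UP_model α
  have hH := homog_class α (model_refl α) (model_tot α) (model_const α) (model_disj α)
    (mkUP α (aFun α i) : UP α)
  have hc : colorOf α (mkUP α (aFun α i) : UP α) = some i :=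
    (colorOf_eq_some_iff α (model_disj α) _ i).2 (p_aFun α i)
  rw [hc] at hH
  exact theory_eq_of_homog_infinite α hH (homog_patC α (some i)) (class_a_infinite α i)
    inferInstance

lemma isClassTheory_thI (i : α) :
    IsClassTheory (Lang α) (Mod α) (eRel α) ((Lang α).completeTheory (PatC α (some i))) := by
  haveI := UP_model α
  exact ⟨Theory.ModelType.of _ (UP α), mkUP α (aFun α i), (classTheory_a α i).symm⟩

end Ultra

end Stmt15

/-- for any cardinal `λ` there is a theory `T = Th(A_E)` of an `E`-combination
in a language of cardinality `|λ + 1|` whose `e`-spectrum equals `λ`. -/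
theorem stmt15 (lam : Cardinal.{0}) :
    ∃ (L : FirstOrder.Language.{0,0}) (hR : L.IsRelational) (M : Type) (S : L.Structure M)
      (e : L.Relations 2) (I : Type) (rep : I → M),
      (∀ a : M, S.RelMap e ![a, a]) ∧
      (∀ a b : M, S.RelMap e ![a, b] → S.RelMap e ![b, a]) ∧
      (∀ a b c : M, S.RelMap e ![a, b] → S.RelMap e ![b, c] → S.RelMap e ![a, c]) ∧
      (∀ (n : ℕ) (r : L.Relations n) (x : Fin n → M), S.RelMap r x →
        ∀ k l : Fin n, S.RelMap e ![x k, x l]) ∧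
      (∀ a : M, ∃ i : I, S.RelMap e ![a, rep i]) ∧
      L.card = lam + 1 ∧
      @eSp L hR M S e I rep = lam := by
  classical
  refine ⟨Stmt15.Lang lam.out, inferInstance, Stmt15.Mod lam.out, inferInstance,
    Stmt15.eRel lam.out, Stmt15.Cl lam.out, Stmt15.rep lam.out, ?_, ?_, ?_, ?_, ?_, ?_, ?_⟩
  · exact fun a => rfl
  · exact fun a b h => Eq.symm h
  · exact fun a b c h1 h2 => Eq.trans h1 h2
  · intro n r x h k l
    rcases n with _ | _ | _ | n
    · exact (show Empty from r).elim
    · have hkl : k = l := Fin.ext (by omega)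
      subst hkl
      exact rfl
    · have h' : (x 0).1 = (x 1).1 := h
      fin_cases k <;> fin_cases l <;> first | rfl | exact h' | exact Eq.symm h'
    · exact (show Empty from r).elim
  · exact fun a => ⟨a.1, rfl⟩
  · rw [Stmt15.card_Lang, Cardinal.mk_out]
  · rw [eSp]
    apply le_antisymm
    · refine le_trans ?_ (le_of_eq (Cardinal.mk_out lam))
      have key : ∀ T0 : {T0 : (Stmt15.Lang lam.out).Theory //
          IsClassTheory (Stmt15.Lang lam.out) (Stmt15.Mod lam.out) (Stmt15.eRel lam.out) T0 ∧
          ∀ i : Stmt15.Cl lam.out,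
            T0 ≠ classTheory (Stmt15.Lang lam.out) (Stmt15.eRel lam.out) (Stmt15.rep lam.out i)},
          ∃ i : lam.out, T0.1 =
            (Stmt15.Lang lam.out).completeTheory (Stmt15.PatC lam.out (some i)) := by
        rintro ⟨T0, ⟨N, a, rfl⟩, hne⟩
        rcases Stmt15.class_theory_cases lam.out (N := N) a with ⟨c, hc⟩ | ⟨i, hi⟩
        · exact absurd hc (hne c)
        · exact ⟨i, hi⟩
      refine Cardinal.mk_le_of_injective (f := fun T0 => (key T0).choose) ?_
      intro T0 T1 h
      simp only at h
      apply Subtype.ext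
      rw [(key T0).choose_spec, (key T1).choose_spec, h]
    · refine le_trans (le_of_eq (Cardinal.mk_out lam).symm) ?_
      refine Cardinal.mk_le_of_injective (f := fun i : lam.out =>
        ⟨(Stmt15.Lang lam.out).completeTheory (Stmt15.PatC lam.out (some i)),
          Stmt15.isClassTheory_thI lam.out i, fun c => Stmt15.thI_ne_rep lam.out i c⟩) ?_
      intro i j h
      exact Stmt15.thI_injective lam.out (congrArg Subtype.val h)
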